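/- arXiv:2007.06049 — 3 statements merged into one kernel-verified Lean document; each statement's English description precedes it below -/
import Mathlib

section
/- The expected gradient of the loss (1/τ)|δ(i)|^τ under PER sampling with importance weights equals the expected gradient under uniform sampling of the loss L(δ(i)) = (ηN/(τ+α−αβ))·|δ(i)|^(τ+α−αβ), where η = (min_j |δ(j)|^{αβ})/(∑_j |δ(j)|^α). Concretely, both expected gradients equal η · ∑_i sign(δ(i))·|δ(i)|^(τ+α−αβ−1). -/
open Finset

theorem stmt4 (N : ℕ) (hN : 0 < N) (δ : Fin N → ℝ) (hδ : ∀ i, δ i ≠ 0)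
    (τ α β : ℝ) (hτ : 0 < τ) (hα0 : 0 < α) (hα1 : α ≤ 1) (hβ0 : 0 ≤ β) (hβ1 : β ≤ 1)
    (he : 0 < τ + α - α * β)
    (p w : Fin N → ℝ)
    (hp : ∀ i, p i = |δ i| ^ α / ∑ j, |δ j| ^ α)
    (hw : ∀ i, w i = (1 / ((N : ℝ) * p i)) ^ β
        / (Finset.univ.sup' (Finset.univ_nonempty_iff.mpr (Fin.pos_iff_nonempty.mp hN))
            (fun j => (1 / ((N : ℝ) * p j)) ^ β)))
    (η : ℝ)
    (hη : η = (Finset.univ.inf' (Finset.univ_nonempty_iff.mpr (Fin.pos_iff_nonempty.mp hN))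
        (fun j => |δ j| ^ (α * β))) / ∑ j, |δ j| ^ α) :
    (∑ i, w i * p i * (Real.sign (δ i) * |δ i| ^ (τ - 1))
        = η * ∑ i, Real.sign (δ i) * |δ i| ^ (τ + α - α * β - 1))
    ∧ ((1 / (N : ℝ)) * ∑ i, η * (N : ℝ) * (Real.sign (δ i) * |δ i| ^ (τ + α - α * β - 1))
        = η * ∑ i, Real.sign (δ i) * |δ i| ^ (τ + α - α * β - 1)) := by
  have hne : (Finset.univ : Finset (Fin N)).Nonempty :=
    Finset.univ_nonempty_iff.mpr (Fin.pos_iff_nonempty.mp hN)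
  have habs : ∀ i, (0:ℝ) < |δ i| := fun i => abs_pos.mpr (hδ i)
  have hSpos : (0:ℝ) < ∑ j, |δ j| ^ α :=
    Finset.sum_pos (fun i _ => Real.rpow_pos_of_pos (habs i) α) hne
  set S : ℝ := ∑ j, |δ j| ^ α with hSdef
  have hNpos : (0:ℝ) < (N:ℝ) := by exact_mod_cast hN
  have key : ∀ i, (1 / ((N:ℝ) * p i)) ^ β = ((S / N) ^ β) / |δ i| ^ (α * β) := by
    intro i
    rw [hp]
    have hne1 : |δ i| ^ α ≠ 0 := ne_of_gt (Real.rpow_pos_of_pos (habs i) _)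
    have h1 : (1 / ((N:ℝ) * (|δ i| ^ α / S))) = (S / N) / |δ i| ^ α := by
      field_simp
    rw [h1, Real.div_rpow (by positivity) (by positivity),
      ← Real.rpow_mul (abs_nonneg (δ i))]
  -- the inf is attained at some j0
  obtain ⟨j0, -, hj0⟩ :=
    Finset.exists_mem_eq_inf' hne (fun j => |δ j| ^ (α * β))
  have hmin : ∀ j, |δ j0| ^ (α * β) ≤ |δ j| ^ (α * β) := by
    intro j
    rw [← hj0]
    exact Finset.inf'_le _ (Finset.mem_univ j)
  -- the sup equals value at j0
  have hsup : (Finset.univ.sup' (Finset.univ_nonempty_iff.mpr (Fin.pos_iff_nonempty.mp hN))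
      (fun j => (1 / ((N:ℝ) * p j)) ^ β))
      = ((S / N) ^ β) / |δ j0| ^ (α * β) := by
    apply le_antisymm
    · apply Finset.sup'_le
      intro j _
      rw [key j]
      exact div_le_div_of_nonneg_left (by positivity)
        (Real.rpow_pos_of_pos (habs j0) _) (hmin j)
    · rw [← key j0]
      exact Finset.le_sup' (fun j => (1 / ((N:ℝ) * p j)) ^ β) (Finset.mem_univ j0)
  have hη' : η = |δ j0| ^ (α * β) / S := hη.trans (congrArg (· / S) hj0)
  have hwp : ∀ i, w i * p i = η * |δ i| ^ (α - α * β) := by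
    intro i
    rw [hw i, hsup, key i, hp i, hη']
    have h2 : |δ i| ^ (α - α * β) = |δ i| ^ α / |δ i| ^ (α * β) := by
      rw [← Real.rpow_sub (habs i)]
    rw [h2]
    have c1 : ((S / N : ℝ) ^ β) ≠ 0 := by positivity
    have c2 : (|δ i| ^ (α * β) : ℝ) ≠ 0 := ne_of_gt (Real.rpow_pos_of_pos (habs i) _)
    have c3 : (|δ j0| ^ (α * β) : ℝ) ≠ 0 :=
      ne_of_gt (Real.rpow_pos_of_pos (habs j0) _)
    field_simp
  constructor
  · rw [Finset.mul_sum]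
    apply Finset.sum_congr rfl
    intro i _
    rw [hwp i]
    have h3 : |δ i| ^ (α - α * β) * |δ i| ^ (τ - 1) = |δ i| ^ (τ + α - α * β - 1) := by
      rw [← Real.rpow_add (habs i)]
      ring_nf
    calc η * |δ i| ^ (α - α * β) * (Real.sign (δ i) * |δ i| ^ (τ - 1))
        = η * (Real.sign (δ i) * (|δ i| ^ (α - α * β) * |δ i| ^ (τ - 1))) := by ring
      _ = η * (Real.sign (δ i) * |δ i| ^ (τ + α - α * β - 1)) := by rw [h3]
  · rw [Finset.mul_sum, Finset.mul_sum]
    apply Finset.sum_congr rfl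
    intro i _
    field_simp
end

section
/- When τ + α − αβ = 2, the PER-prioritized loss (1/τ)|δ|^τ has expected gradient proportional to the uniform MSE gradient: ∑_i w(i)·p(i)·sign(δ(i))·|δ(i)|^{τ−1} = ηN · (1/N)∑_i δ(i), where η = (min_j |δ(j)|^{αβ})/(∑_j |δ(j)|^α) > 0. -/
open Finset

theorem stmt11 (N : ℕ) (hN : 0 < N) (δ : Fin N → ℝ) (hδ : ∀ i, δ i ≠ 0)
    (τ α β : ℝ) (hτ : 0 < τ) (hα0 : 0 < α) (hα1 : α ≤ 1) (hβ0 : 0 ≤ β) (hβ1 : β ≤ 1)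
    (he : τ + α - α * β = 2)
    (p w : Fin N → ℝ)
    (hp : ∀ i, p i = |δ i| ^ α / ∑ j, |δ j| ^ α)
    (hw : ∀ i, w i = (1 / ((N : ℝ) * p i)) ^ β
        / (Finset.univ.sup' (Finset.univ_nonempty_iff.mpr (Fin.pos_iff_nonempty.mp hN))
            (fun j => (1 / ((N : ℝ) * p j)) ^ β)))
    (η : ℝ)
    (hη : η = (Finset.univ.inf' (Finset.univ_nonempty_iff.mpr (Fin.pos_iff_nonempty.mp hN))
        (fun j => |δ j| ^ (α * β))) / ∑ j, |δ j| ^ α) :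
    0 < η ∧
    ∑ i, w i * p i * (Real.sign (δ i) * |δ i| ^ (τ - 1))
      = η * (N : ℝ) * ((1 / (N : ℝ)) * ∑ i, δ i) := by
  have hne : (Finset.univ : Finset (Fin N)).Nonempty :=
    Finset.univ_nonempty_iff.mpr (Fin.pos_iff_nonempty.mp hN)
  have habs : ∀ i, (0:ℝ) < |δ i| := fun i => abs_pos.mpr (hδ i)
  set S := ∑ j, |δ j| ^ α with hS_def
  have hS : 0 < S := Finset.sum_pos (fun j _ => Real.rpow_pos_of_pos (habs j) α) hne
  have hNpos : (0:ℝ) < N := Nat.cast_pos.mpr hN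
  set m := Finset.univ.inf' hne (fun j => |δ j| ^ (α * β)) with hm_def
  have hm_le : ∀ j, m ≤ |δ j| ^ (α * β) := fun j => Finset.inf'_le _ (Finset.mem_univ j)
  have hm_pos : 0 < m :=
    (Finset.lt_inf'_iff hne).mpr (fun j _ => Real.rpow_pos_of_pos (habs j) _)
  obtain ⟨j0, _, hj0⟩ := Finset.exists_mem_eq_inf' hne (fun j => |δ j| ^ (α * β))
  have hval : ∀ j, (1 / ((N:ℝ) * p j)) ^ β = (S / N) ^ β / |δ j| ^ (α * β) := by
    intro j
    have hxj := Real.rpow_pos_of_pos (habs j) α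
    rw [hp j]
    have h1 : (1 / ((N:ℝ) * (|δ j| ^ α / S))) = (S / N) / |δ j| ^ α := by
      field_simp
    rw [h1, Real.div_rpow (by positivity) (le_of_lt hxj),
      ← Real.rpow_mul (abs_nonneg _)]
  have hSN : (0:ℝ) < (S / N) ^ β := Real.rpow_pos_of_pos (by positivity) β
  have hM : (Finset.univ.sup' hne (fun j => (1 / ((N:ℝ) * p j)) ^ β)) = (S / N) ^ β / m := by
    apply le_antisymm
    · apply Finset.sup'_le
      intro j _
      rw [hval j]
      gcongr
      exact hm_le j
    · calc (S / N) ^ β / m = (1 / ((N:ℝ) * p j0)) ^ β := by rw [hval j0, ← hj0]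
        _ ≤ _ := Finset.le_sup' (fun j => (1 / ((N:ℝ) * p j)) ^ β) (Finset.mem_univ j0)
  have hterm : ∀ i, w i * p i * (Real.sign (δ i) * |δ i| ^ (τ - 1)) = η * δ i := by
    intro i
    have hxi := habs i
    have hab := Real.rpow_pos_of_pos hxi (α * β)
    have ha := Real.rpow_pos_of_pos hxi α
    have hx : |δ i| ^ α * |δ i| ^ (τ - 1) = |δ i| * |δ i| ^ (α * β) := by
      rw [← Real.rpow_add hxi, show α + (τ - 1) = 1 + α * β by linarith,
        Real.rpow_add hxi, Real.rpow_one]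
    have hsign : Real.sign (δ i) * |δ i| = δ i := by
      rcases (hδ i).lt_or_gt with h | h
      · rw [Real.sign_of_neg h, abs_of_neg h]; ring
      · rw [Real.sign_of_pos h, abs_of_pos h]; ring
    rw [hw i, hval i, hM, hp i, hη]
    field_simp
    linear_combination (Real.sign (δ i)) * hx +
      (|δ i|^(α*β)) * hsign
  rw [Finset.sum_congr rfl (fun i _ => hterm i), ← Finset.mul_sum]
  refine ⟨by rw [hη]; positivity, ?_⟩
  field_simp
end

section
/- The generalized PAL loss with Huber threshold κ, L(δ) = (1/λ)·(0.5κ^α δ² if |δ| ≤ κ, else κ|δ|^{1+α}/(1+α)), has derivative (1/λ)·max(|δ|^α, κ^α)·hubergrad_κ(δ) for δ ≠ 0, |δ| ≠ κ, where hubergrad_κ(δ) = δ for |δ| ≤ κ and κ·sign(δ) otherwise. -/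
theorem stmt18 (α κ lam : ℝ) (hα : 0 < α) (hκ : 0 < κ) (hlam : 0 < lam)
    (L : ℝ → ℝ)
    (hL : ∀ x : ℝ, L x = (1 / lam) *
        (if |x| ≤ κ then 0.5 * κ ^ α * x ^ 2 else κ * |x| ^ (1 + α) / (1 + α)))
    (δ : ℝ) (hδ0 : δ ≠ 0) (hδκ : |δ| ≠ κ) :
    HasDerivAt L
      ((1 / lam) * max (|δ| ^ α) (κ ^ α) * (if |δ| ≤ κ then δ else κ * Real.sign δ)) δ := by
  rcases lt_or_gt_of_ne hδκ with hlt | hgt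
  · -- |δ| < κ : quadratic branch
    have hmem : {x : ℝ | |x| < κ} ∈ nhds δ :=
      (isOpen_lt continuous_abs continuous_const).mem_nhds hlt
    have heq : L =ᶠ[nhds δ] fun x => (1 / lam) * (0.5 * κ ^ α * x ^ 2) := by
      filter_upwards [hmem] with x hx
      rw [hL x, if_pos hx.le]
    have hd : HasDerivAt (fun x : ℝ => (1 / lam) * (0.5 * κ ^ α * x ^ 2))
        ((1 / lam) * (0.5 * κ ^ α * (2 * δ ^ 1))) δ := by
      exact (((hasDerivAt_pow 2 δ)).const_mul (0.5 * κ ^ α)).const_mul (1 / lam)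
    have hmax : max (|δ| ^ α) (κ ^ α) = κ ^ α :=
      max_eq_right (Real.rpow_le_rpow (abs_nonneg δ) hlt.le hα.le)
    have := hd.congr_of_eventuallyEq heq
    rw [if_pos hlt.le, hmax]
    refine this.congr_deriv ?_
    ring
  · -- κ < |δ| : power branch
    have hmem : {x : ℝ | κ < |x|} ∈ nhds δ :=
      (isOpen_lt continuous_const continuous_abs).mem_nhds hgt
    have heq : L =ᶠ[nhds δ] fun x => (1 / lam) * (κ * |x| ^ (1 + α) / (1 + α)) := by
      filter_upwards [hmem] with x hx
      rw [hL x, if_neg (not_le.mpr hx)]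
    have h1α : (0:ℝ) < 1 + α := by linarith
    have hg : HasDerivAt (fun x : ℝ => |x| ^ (1 + α))
        ((1 + α) * |δ| ^ α * Real.sign δ) δ := by
      rcases hδ0.lt_or_gt with hneg | hpos
      · have hmem' : {x : ℝ | x < 0} ∈ nhds δ :=
          (isOpen_lt continuous_id continuous_const).mem_nhds hneg
        have heq' : (fun x : ℝ => |x| ^ (1 + α)) =ᶠ[nhds δ]
            fun x : ℝ => (-x) ^ (1 + α) := by
          filter_upwards [hmem'] with x hx
          rw [abs_of_neg hx]
        have hbase : HasDerivAt (fun x : ℝ => (-x) ^ (1 + α))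
            (((1 + α) * (-δ) ^ (1 + α - 1)) * (-1)) δ := by
          exact (Real.hasDerivAt_rpow_const (Or.inl (neg_ne_zero.mpr hδ0))).comp δ
            (hasDerivAt_neg δ)
        have := hbase.congr_of_eventuallyEq heq'
        refine this.congr_deriv ?_
        rw [Real.sign_of_neg hneg, abs_of_neg hneg]
        ring_nf
      · have hmem' : {x : ℝ | (0:ℝ) < x} ∈ nhds δ :=
          (isOpen_lt continuous_const continuous_id).mem_nhds hpos
        have heq' : (fun x : ℝ => |x| ^ (1 + α)) =ᶠ[nhds δ]
            fun x : ℝ => x ^ (1 + α) := by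
          filter_upwards [hmem'] with x hx
          rw [abs_of_pos hx]
        have hbase : HasDerivAt (fun x : ℝ => x ^ (1 + α))
            ((1 + α) * δ ^ (1 + α - 1)) δ :=
          Real.hasDerivAt_rpow_const (Or.inl hδ0)
        have := hbase.congr_of_eventuallyEq heq'
        refine this.congr_deriv ?_
        rw [Real.sign_of_pos hpos, abs_of_pos hpos]
        ring_nf
    have hd := (((hg.const_mul κ).div_const (1 + α)).const_mul (1 / lam)).congr_of_eventuallyEq heq
    have hmax : max (|δ| ^ α) (κ ^ α) = |δ| ^ α :=
      max_eq_left (Real.rpow_le_rpow hκ.le hgt.le hα.le)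
    rw [if_neg (not_le.mpr hgt), hmax]
    refine hd.congr_deriv ?_
    field_simp
end
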